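/- arXiv:1004.4408 — 6 statements merged into one kernel-verified Lean document; each statement's English description precedes it below -/
import Mathlib

section
/- Let B = (b_{ij}) be a real symmetric n×n matrix with nonnegative diagonal entries, and let B̃ be the symmetric matrix with B̃_{ii} = b_{ii} and B̃_{ij} = -|b_{ij}| for i ≠ j. Then the minimal eigenvalue satisfies λ_min(B) ≥ λ_min(B̃). -/
/-- For a real symmetric matrix `B` with nonnegative diagonal, and `B̃` obtained by
keeping the diagonal and replacing off-diagonal entries `b_{ij}` by `-|b_{ij}|`,
the minimal eigenvalues (characterized as the best constants in the Rayleigh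
quotient lower bound) satisfy `λ_min(B) ≥ λ_min(B̃)`. -/
theorem lambdaMin_ge_lambdaMin_abs_offdiag
    (n : ℕ) (B : Matrix (Fin n) (Fin n) ℝ)
    (hsymm : B.IsSymm)
    (hdiag : ∀ i, 0 ≤ B i i)
    (Bt : Matrix (Fin n) (Fin n) ℝ)
    (hBt : ∀ i j, Bt i j = if i = j then B i i else -|B i j|)
    (lB lBt : ℝ)
    (hlB : IsGreatest {c : ℝ | ∀ v : Fin n → ℝ,
        c * ∑ i, v i ^ 2 ≤ ∑ i, ∑ j, v i * B i j * v j} lB)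
    (hlBt : IsGreatest {c : ℝ | ∀ v : Fin n → ℝ,
        c * ∑ i, v i ^ 2 ≤ ∑ i, ∑ j, v i * Bt i j * v j} lBt) :
    lBt ≤ lB := by
  apply hlB.2
  intro v
  have h1 := hlBt.1 (fun i => |v i|)
  have h2 : (∑ i, |v i| ^ 2) = ∑ i, v i ^ 2 := by
    simp [sq_abs]
  rw [h2] at h1
  refine h1.trans (Finset.sum_le_sum fun i _ => Finset.sum_le_sum fun j _ => ?_)
  rw [hBt i j]
  by_cases hij : i = j
  · subst hij
    simp [mul_comm, mul_assoc, mul_left_comm, abs_mul_abs_self, sq_abs]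
  · simp only [hij, if_false]
    have : |v i * B i j * v j| ≤ |B i j| * |v i| * |v j| := by
      rw [abs_mul, abs_mul]; ring_nf; exact le_refl _
    nlinarith [neg_abs_le (v i * B i j * v j)]
end

section
/- For all x > 0 and all c ≥ 1, ∫₀^x e^{cy²} dy · ∫_x^∞ e^{-cz²} dz ≤ π^{5/2}/(16√c). -/
open Real MeasureTheory Set

lemma shifted_gaussian (c x : ℝ) :
    ∫ z in Set.Ioi x, Real.exp (-(c * (z - x) ^ 2)) = Real.sqrt (π / c) / 2 := by
  have mp : MeasurePreserving (fun z : ℝ => z + x) volume volume :=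
    measurePreserving_add_right volume x
  have emb : MeasurableEmbedding (fun z : ℝ => z + x) :=
    (MeasurableEquiv.addRight x).measurableEmbedding
  have h := mp.setIntegral_preimage_emb emb
    (fun z => Real.exp (-(c * (z - x) ^ 2))) (Set.Ioi x)
  have hpre : (fun z : ℝ => z + x) ⁻¹' Set.Ioi x = Set.Ioi 0 := by ext z; simp
  rw [hpre] at h
  simp only [add_sub_cancel_right] at h
  rw [← h]
  have := integral_gaussian_Ioi c
  simp_rw [neg_mul] at this
  rw [this]

lemma gaussian_integrable (c : ℝ) (hc : 0 < c) :
    Integrable (fun z : ℝ => Real.exp (-(c * z ^ 2))) := by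
  have := integrable_exp_neg_mul_sq hc
  simp_rw [neg_mul] at this
  exact this

lemma tail_bound (c x : ℝ) (hc : 0 < c) (hx : 0 < x) :
    ∫ z in Set.Ioi x, Real.exp (-(c * z ^ 2))
      ≤ Real.exp (-(c * x ^ 2)) * (Real.sqrt (π / c) / 2) := by
  have hint1 : IntegrableOn (fun z : ℝ => Real.exp (-(c * z ^ 2))) (Set.Ioi x) :=
    (gaussian_integrable c hc).integrableOn
  have hshift : Integrable (fun z : ℝ => Real.exp (-(c * (z - x) ^ 2))) := by
    have mp : MeasurePreserving (fun z : ℝ => z + -x) volume volume :=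
      measurePreserving_add_right volume (-x)
    have emb : MeasurableEmbedding (fun z : ℝ => z + -x) :=
      (MeasurableEquiv.addRight (-x)).measurableEmbedding
    have h := (mp.integrable_comp_emb emb).mpr (gaussian_integrable c hc)
    have heq : ((fun z : ℝ => Real.exp (-(c * z ^ 2))) ∘ (fun z : ℝ => z + -x))
        = fun z : ℝ => Real.exp (-(c * (z - x) ^ 2)) := by
      funext z; simp [Function.comp, sub_eq_add_neg]
    rwa [heq] at h
  have hint2 : IntegrableOn
      (fun z : ℝ => Real.exp (-(c * x ^ 2)) * Real.exp (-(c * (z - x) ^ 2)))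
      (Set.Ioi x) := (hshift.const_mul _).integrableOn
  have hmono : ∫ z in Set.Ioi x, Real.exp (-(c * z ^ 2))
      ≤ ∫ z in Set.Ioi x,
        Real.exp (-(c * x ^ 2)) * Real.exp (-(c * (z - x) ^ 2)) := by
    apply setIntegral_mono_on hint1 hint2 measurableSet_Ioi
    intro z hz
    rw [← Real.exp_add]
    apply Real.exp_le_exp.mpr
    have hzx : x < z := hz
    nlinarith [mul_nonneg (mul_nonneg hc.le hx.le) (sub_nonneg.mpr hzx.le)]
  calc ∫ z in Set.Ioi x, Real.exp (-(c * z ^ 2))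
      ≤ ∫ z in Set.Ioi x,
          Real.exp (-(c * x ^ 2)) * Real.exp (-(c * (z - x) ^ 2)) := hmono
    _ = Real.exp (-(c * x ^ 2)) * (Real.sqrt (π / c) / 2) := by
        rw [integral_const_mul, shifted_gaussian]

lemma front_bound_large (c x : ℝ) (hc : 1 ≤ c) (hx : Real.sqrt c ≤ c * x) (hx0 : 0 < x) :
    (∫ y in (0:ℝ)..x, Real.exp (c * y ^ 2)) ≤ Real.exp (c * x ^ 2) / Real.sqrt c := by
  have hc0 : 0 < c := lt_of_lt_of_le one_pos hc
  have hs : 0 < Real.sqrt c := Real.sqrt_pos.mpr hc0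
  have hsq : Real.sqrt c ^ 2 = c := Real.sq_sqrt hc0.le
  set t : ℝ := 1 / Real.sqrt c with ht
  have ht0 : 0 < t := by positivity
  have htx : t ≤ x := by
    rw [ht, div_le_iff₀ hs]
    nlinarith [hx, hsq, hs]
  have hct : c * t ^ 2 = 1 := by
    rw [ht]; field_simp; exact hsq.symm
  have hcont : Continuous fun y : ℝ => Real.exp (c * y ^ 2) := by continuity
  have hii : ∀ a b : ℝ, IntervalIntegrable (fun y => Real.exp (c * y ^ 2)) volume a b :=
    fun a b => hcont.intervalIntegrable a b
  have hsplit : (∫ y in (0:ℝ)..x, Real.exp (c * y ^ 2))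
      = (∫ y in (0:ℝ)..t, Real.exp (c * y ^ 2))
        + ∫ y in t..x, Real.exp (c * y ^ 2) :=
    (intervalIntegral.integral_add_adjacent_intervals (hii 0 t) (hii t x)).symm
  have hb1 : (∫ y in (0:ℝ)..t, Real.exp (c * y ^ 2)) ≤ t * Real.exp 1 := by
    have : (∫ y in (0:ℝ)..t, Real.exp (c * y ^ 2))
        ≤ ∫ y in (0:ℝ)..t, Real.exp 1 := by
      apply intervalIntegral.integral_mono_on ht0.le (hii 0 t) intervalIntegrable_const
      intro y hy
      apply Real.exp_le_exp.mpr
      have hyt : y * y ≤ t * t :=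
        mul_le_mul hy.2 hy.2 hy.1 ht0.le
      nlinarith [hct, hc0.le, mul_le_mul_of_nonneg_left hyt hc0.le]
    simpa using this
  have hb2 : (∫ y in t..x, Real.exp (c * y ^ 2))
      ≤ Real.sqrt c * ((Real.exp (c * x ^ 2) - Real.exp 1) / (2 * c)) := by
    have hmono : (∫ y in t..x, Real.exp (c * y ^ 2))
        ≤ ∫ y in t..x, Real.sqrt c * (y * Real.exp (c * y ^ 2)) := by
      apply intervalIntegral.integral_mono_on htx (hii t x)
      · exact ((continuous_const.mul ((continuous_id.mul hcont))).intervalIntegrable t x)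
      · intro y hy
        have h1 : 1 ≤ Real.sqrt c * y := by
          have := hy.1
          rw [ht] at this
          rw [div_le_iff₀ hs] at this
          nlinarith
        nlinarith [Real.exp_pos (c * y ^ 2)]
    have hderiv : ∀ y : ℝ, HasDerivAt (fun y : ℝ => Real.exp (c * y ^ 2) / (2 * c))
        (y * Real.exp (c * y ^ 2)) y := by
      intro y
      have h1 : HasDerivAt (fun y : ℝ => c * y ^ 2) (c * (2 * y)) y := by
        simpa using (hasDerivAt_pow 2 y).const_mul c
      have h2 := (h1.exp).div_const (2 * c)
      convert h2 using 1
      · rfl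
      · rfl
      rw [eq_div_iff (by positivity)]
      ring
    have hint : (∫ y in t..x, y * Real.exp (c * y ^ 2))
        = Real.exp (c * x ^ 2) / (2 * c) - Real.exp (c * t ^ 2) / (2 * c) := by
      apply intervalIntegral.integral_eq_sub_of_hasDerivAt (fun y _ => hderiv y)
      exact (continuous_id.mul hcont).intervalIntegrable t x
    rw [intervalIntegral.integral_const_mul] at hmono
    rw [hint, hct] at hmono
    calc (∫ y in t..x, Real.exp (c * y ^ 2))
        ≤ Real.sqrt c * (Real.exp (c * x ^ 2) / (2 * c) - Real.exp 1 / (2 * c)) := hmono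
      _ = Real.sqrt c * ((Real.exp (c * x ^ 2) - Real.exp 1) / (2 * c)) := by ring
  have hE : Real.exp 1 ≤ Real.exp (c * x ^ 2) := by
    apply Real.exp_le_exp.mpr
    nlinarith [Real.sqrt_nonneg c]
  rw [hsplit]
  have hfin : t * Real.exp 1 + Real.sqrt c * ((Real.exp (c * x ^ 2) - Real.exp 1) / (2 * c))
      ≤ Real.exp (c * x ^ 2) / Real.sqrt c := by
    rw [ht, le_div_iff₀ hs]
    field_simp
    nlinarith [hE, hsq, hs, hc0,
      mul_nonneg (mul_nonneg (sub_nonneg.mpr hE) hs.le) hc0.le]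
  linarith [hb1, hb2, hfin]

/-- For all `x > 0` and `c ≥ 1`,
`∫₀ˣ e^{cy²} dy · ∫ₓ^∞ e^{-cz²} dz ≤ π^{5/2} / (16 √c)`. -/
theorem gaussian_double_integral_bound (x c : ℝ) (hx : 0 < x) (hc : 1 ≤ c) :
    (∫ y in (0:ℝ)..x, Real.exp (c * y ^ 2)) * (∫ z in Set.Ioi x, Real.exp (-(c * z ^ 2)))
      ≤ Real.pi ^ ((5:ℝ)/2) / (16 * Real.sqrt c) := by
  have hc0 : 0 < c := lt_of_lt_of_le one_pos hc
  have hs : 0 < Real.sqrt c := Real.sqrt_pos.mpr hc0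
  have hsq : Real.sqrt c ^ 2 = c := Real.sq_sqrt hc0.le
  have hsπ : 0 < Real.sqrt π := Real.sqrt_pos.mpr pi_pos
  have hI2 := tail_bound c x hc0 hx
  have hI2nonneg : 0 ≤ ∫ z in Set.Ioi x, Real.exp (-(c * z ^ 2)) :=
    setIntegral_nonneg measurableSet_Ioi (fun z _ => (Real.exp_pos _).le)
  have hsplitsqrt : Real.sqrt (π / c) = Real.sqrt π / Real.sqrt c :=
    Real.sqrt_div pi_pos.le c
  have key : (∫ y in (0:ℝ)..x, Real.exp (c * y ^ 2))
      * (∫ z in Set.Ioi x, Real.exp (-(c * z ^ 2))) ≤ Real.sqrt π / (2 * c) := by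
    rcases le_or_gt (c * x) (Real.sqrt c) with h1 | h1
    · -- small x : c*x ≤ √c, i.e. x ≤ 1/√c
      have hcont : Continuous fun y : ℝ => Real.exp (c * y ^ 2) := by continuity
      have hI1 : (∫ y in (0:ℝ)..x, Real.exp (c * y ^ 2)) ≤ x * Real.exp (c * x ^ 2) := by
        have : (∫ y in (0:ℝ)..x, Real.exp (c * y ^ 2))
            ≤ ∫ y in (0:ℝ)..x, Real.exp (c * x ^ 2) := by
          apply intervalIntegral.integral_mono_on hx.le (hcont.intervalIntegrable 0 x)
            intervalIntegrable_const
          intro y hy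
          apply Real.exp_le_exp.mpr
          have hyx : y * y ≤ x * x :=
            mul_le_mul hy.2 hy.2 hy.1 hx.le
          nlinarith [mul_le_mul_of_nonneg_left hyx hc0.le]
        simpa using this
      have hI1nonneg : 0 ≤ x * Real.exp (c * x ^ 2) := by positivity
      calc (∫ y in (0:ℝ)..x, Real.exp (c * y ^ 2))
            * (∫ z in Set.Ioi x, Real.exp (-(c * z ^ 2)))
          ≤ (x * Real.exp (c * x ^ 2))
            * (Real.exp (-(c * x ^ 2)) * (Real.sqrt (π / c) / 2)) :=
            mul_le_mul hI1 hI2 hI2nonneg hI1nonneg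
        _ = x * (Real.sqrt (π / c) / 2) := by
            rw [Real.exp_neg]
            field_simp [Real.exp_ne_zero]
        _ ≤ Real.sqrt π / (2 * c) := by
            rw [hsplitsqrt]
            have hxle : x ≤ 1 / Real.sqrt c := by
              rw [le_div_iff₀ hs]; nlinarith
            have hmss : Real.sqrt c * Real.sqrt c = c := Real.mul_self_sqrt hc0.le
            calc x * (Real.sqrt π / Real.sqrt c / 2)
                ≤ (1 / Real.sqrt c) * (Real.sqrt π / Real.sqrt c / 2) :=
                  mul_le_mul_of_nonneg_right hxle (by positivity)
              _ = Real.sqrt π / (2 * c) := by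
                  rw [show (1 / Real.sqrt c) * (Real.sqrt π / Real.sqrt c / 2)
                      = Real.sqrt π / (Real.sqrt c * Real.sqrt c * 2) by ring,
                    hmss, mul_comm c 2]
    · -- large x
      have hI1 := front_bound_large c x hc h1.le hx
      have hI1nonneg : 0 ≤ Real.exp (c * x ^ 2) / Real.sqrt c := by positivity
      calc (∫ y in (0:ℝ)..x, Real.exp (c * y ^ 2))
            * (∫ z in Set.Ioi x, Real.exp (-(c * z ^ 2)))
          ≤ (Real.exp (c * x ^ 2) / Real.sqrt c)
            * (Real.exp (-(c * x ^ 2)) * (Real.sqrt (π / c) / 2)) :=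
            mul_le_mul hI1 hI2 hI2nonneg hI1nonneg
        _ = Real.sqrt (π / c) / (2 * Real.sqrt c) := by
            rw [Real.exp_neg]
            field_simp [Real.exp_ne_zero]
        _ = Real.sqrt π / (2 * c) := by
            rw [hsplitsqrt]
            rw [div_div]
            congr 1
            nlinarith
  have hpow : Real.pi ^ ((5:ℝ)/2) = π ^ 2 * Real.sqrt π := by
    rw [show ((5:ℝ)/2) = ((2:ℕ) : ℝ) + 1/2 by norm_num, Real.rpow_add pi_pos,
      Real.rpow_natCast, Real.sqrt_eq_rpow]
  have hfinal : Real.sqrt π / (2 * c) ≤ Real.pi ^ ((5:ℝ)/2) / (16 * Real.sqrt c) := by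
    rw [hpow, div_le_div_iff₀ (by positivity) (by positivity)]
    have h8 : (8:ℝ) ≤ π ^ 2 := by nlinarith [pi_gt_three]
    have hsc : Real.sqrt c ≤ c := by nlinarith [Real.one_le_sqrt.mpr hc, hsq]
    nlinarith [mul_nonneg hsπ.le hs.le, mul_nonneg hsπ.le hc0.le,
      mul_le_mul_of_nonneg_left hsc hsπ.le]
  linarith [key, hfinal]
end

section
/- (Gautschi's inequality for p = 2) For all x ≥ 0, (1/2)(√(x²+2) - x) < e^{x²} ∫_x^∞ e^{-y²} dy ≤ (π/4)(√(x² + 4/π) - x). -/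
open Real MeasureTheory

section GautschiAux
open Set Filter

noncomputable def GI (x : ℝ) : ℝ := ∫ y in Set.Ioi x, Real.exp (-y ^ 2)
noncomputable def Gs (c x : ℝ) : ℝ := Real.sqrt (x ^ 2 + c)
noncomputable def Gφ (c x : ℝ) : ℝ := (x + Gs c x)⁻¹
noncomputable def GD (c x : ℝ) : ℝ := GI x - Gφ c x * Real.exp (-x ^ 2)

lemma G_int : Integrable (fun y : ℝ => Real.exp (-y ^ 2)) := by
  have := integrable_exp_neg_mul_sq (b := 1) one_pos
  simpa using this

lemma Gs_pos {c : ℝ} (hc : 0 < c) (x : ℝ) : 0 < Gs c x :=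
  Real.sqrt_pos.2 (by positivity)

lemma abs_lt_Gs {c : ℝ} (hc : 0 < c) (x : ℝ) : |x| < Gs c x := by
  rw [← Real.sqrt_sq_eq_abs]
  exact Real.sqrt_lt_sqrt (by positivity) (by linarith)

lemma Gxs_pos {c : ℝ} (hc : 0 < c) (x : ℝ) : 0 < x + Gs c x := by
  have := abs_lt_Gs hc x
  have := neg_abs_le x
  linarith

lemma Gs_sq {c : ℝ} (hc : 0 < c) (x : ℝ) : Gs c x ^ 2 = x ^ 2 + c :=
  Real.sq_sqrt (by positivity)

lemma hasDerivAt_Gs {c : ℝ} (hc : 0 < c) (x : ℝ) :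
    HasDerivAt (Gs c) (x / Gs c x) x := by
  have h1 : HasDerivAt (fun x : ℝ => x ^ 2 + c) (2 * x) x := by
    simpa using ((hasDerivAt_pow 2 x).add_const c)
  have h2 := (Real.hasDerivAt_sqrt (x := x ^ 2 + c) (by positivity)).comp x h1
  refine (h2 : HasDerivAt (Gs c) _ x).congr_deriv ?_
  rw [Gs]
  field_simp

lemma hasDerivAt_Gφ {c : ℝ} (hc : 0 < c) (x : ℝ) :
    HasDerivAt (Gφ c) (-((1 + x / Gs c x) / (x + Gs c x) ^ 2)) x := by
  have h1 : HasDerivAt (fun x => x + Gs c x) (1 + x / Gs c x) x :=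
    (hasDerivAt_id x).add (hasDerivAt_Gs hc x)
  have h2 := h1.inv (ne_of_gt (Gxs_pos hc x))
  have : -((1 + x / Gs c x) / (x + Gs c x) ^ 2) = -(1 + x / Gs c x) / (x + Gs c x) ^ 2 := by ring
  rw [this]
  exact h2.congr_deriv (by ring)

lemma GI_eq (x : ℝ) : GI x = GI 0 - ∫ y in (0:ℝ)..x, Real.exp (-y ^ 2) := by
  rcases le_or_gt 0 x with h | h
  · have hu : Set.Ioi (0:ℝ) = Set.Ioc 0 x ∪ Set.Ioi x := (Set.Ioc_union_Ioi_eq_Ioi h).symm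
    have : GI 0 = (∫ y in Set.Ioc (0:ℝ) x, Real.exp (-y ^ 2)) + GI x := by
      rw [GI, GI, hu, setIntegral_union (Set.Ioc_disjoint_Ioi le_rfl) measurableSet_Ioi
        (G_int.integrableOn) (G_int.integrableOn)]
    rw [intervalIntegral.integral_of_le h]
    linarith
  · have hu : Set.Ioi x = Set.Ioc x 0 ∪ Set.Ioi 0 := (Set.Ioc_union_Ioi_eq_Ioi h.le).symm
    have : GI x = (∫ y in Set.Ioc x (0:ℝ), Real.exp (-y ^ 2)) + GI 0 := by
      rw [GI, GI, hu, setIntegral_union (Set.Ioc_disjoint_Ioi le_rfl) measurableSet_Ioi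
        (G_int.integrableOn) (G_int.integrableOn)]
    rw [intervalIntegral.integral_symm, intervalIntegral.integral_of_le h.le]
    linarith

lemma hasDerivAt_GI (x : ℝ) : HasDerivAt GI (-Real.exp (-x ^ 2)) x := by
  have hcont : Continuous fun y : ℝ => Real.exp (-y ^ 2) := by continuity
  have h := intervalIntegral.integral_hasDerivAt_right (f := fun y : ℝ => Real.exp (-y ^ 2))
    (a := 0) (b := x) (hcont.intervalIntegrable 0 x)
    (hcont.stronglyMeasurableAtFilter _ _) hcont.continuousAt
  have h2 := (hasDerivAt_const x (GI 0)).sub h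
  simp only [zero_sub] at h2
  exact h2.congr_deriv rfl |>.congr_of_eventuallyEq (Filter.Eventually.of_forall fun y => (GI_eq y))

lemma GI_nonneg (x : ℝ) : 0 ≤ GI x :=
  setIntegral_nonneg measurableSet_Ioi (fun y _ => (Real.exp_pos _).le)

lemma tendsto_GI : Tendsto GI atTop (nhds 0) := by
  have hb : ∀ x : ℝ, 1 ≤ x → GI x ≤ Real.exp (-x) := by
    intro x hx
    rw [← integral_exp_neg_Ioi x]
    apply setIntegral_mono_on G_int.integrableOn (exp_neg_integrableOn_Ioi x one_pos |>.congr_fun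
      (fun y _ => by norm_num) measurableSet_Ioi) measurableSet_Ioi
    intro y hy
    have h1 : 1 ≤ y := le_trans hx (le_of_lt hy)
    exact Real.exp_le_exp.2 (by nlinarith)
  have h0 : Tendsto (fun x : ℝ => Real.exp (-x)) atTop (nhds 0) :=
    Real.tendsto_exp_neg_atTop_nhds_zero
  exact squeeze_zero' (Filter.Eventually.of_forall GI_nonneg)
    (Filter.eventually_atTop.2 ⟨1, hb⟩) h0

lemma tendsto_exp_neg_sq : Tendsto (fun x : ℝ => Real.exp (-x ^ 2)) atTop (nhds 0) :=
  Real.tendsto_exp_neg_atTop_nhds_zero.comp (tendsto_pow_atTop two_ne_zero)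

lemma Gφ_nonneg {c : ℝ} (hc : 0 < c) (x : ℝ) : 0 ≤ Gφ c x :=
  (inv_pos.2 (Gxs_pos hc x)).le

lemma Gφ_le {c : ℝ} (hc : 0 < c) {x : ℝ} (hx : 0 ≤ x) : Gφ c x ≤ (Real.sqrt c)⁻¹ := by
  apply inv_anti₀ (Real.sqrt_pos.2 hc)
  have : Real.sqrt c ≤ Gs c x := Real.sqrt_le_sqrt (by nlinarith)
  linarith

lemma tendsto_GD {c : ℝ} (hc : 0 < c) : Tendsto (GD c) atTop (nhds 0) := by
  have h2 : Tendsto (fun x => Gφ c x * Real.exp (-x ^ 2)) atTop (nhds 0) := by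
    apply squeeze_zero' (g := fun x => (Real.sqrt c)⁻¹ * Real.exp (-x ^ 2))
    · exact Filter.Eventually.of_forall fun x => mul_nonneg (Gφ_nonneg hc x) (Real.exp_pos _).le
    · filter_upwards [Filter.eventually_ge_atTop (0:ℝ)] with x hx
      exact mul_le_mul_of_nonneg_right (Gφ_le hc hx) (Real.exp_pos _).le
    · simpa using tendsto_exp_neg_sq.const_mul (Real.sqrt c)⁻¹
  exact (by simpa using tendsto_GI.sub h2 : Tendsto (fun x => GI x - Gφ c x * Real.exp (-x ^ 2)) atTop (nhds 0))

lemma hasDerivAt_GD {c : ℝ} (hc : 0 < c) (x : ℝ) :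
    HasDerivAt (GD c) (Real.exp (-x ^ 2) *
      ((x * Gs c x - x ^ 2 - c + 1) / (Gs c x * (x + Gs c x)))) x := by
  have he : HasDerivAt (fun x : ℝ => Real.exp (-x ^ 2)) (-2 * x * Real.exp (-x ^ 2)) x := by
    have h1 : HasDerivAt (fun x : ℝ => -x ^ 2) (-(2 * x)) x := by
      simpa using (hasDerivAt_pow 2 x).fun_neg
    simpa [mul_comm, Function.comp_def] using (Real.hasDerivAt_exp (-x ^ 2)).comp x h1
  have h := (hasDerivAt_GI x).sub ((hasDerivAt_Gφ hc x).mul he)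
  refine (h : HasDerivAt (GD c) _ x).congr_deriv ?_
  have hs := Gs_pos hc x
  have hxs := Gxs_pos hc x
  have hsq := Gs_sq hc x
  simp only [Gφ]
  field_simp
  linear_combination (-(x + Gs c x)) * hsq

noncomputable def Gn (c x : ℝ) : ℝ := x * Gs c x - x ^ 2 - c + 1

lemma Gn_key {c : ℝ} (hc : 0 < c) (x : ℝ) :
    x * Gs c x - x ^ 2 = c * x / (x + Gs c x) := by
  have hxs := Gxs_pos hc x
  have hsq := Gs_sq hc x
  field_simp
  linear_combination x * hsq

lemma Gn_mono {c : ℝ} (hc : 0 < c) {a b : ℝ} (ha : 0 ≤ a) (hab : a ≤ b) :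
    Gn c a ≤ Gn c b := by
  have hb : 0 ≤ b := ha.trans hab
  have hsa := Gs_pos hc a
  have hsb := Gs_pos hc b
  have h1 : a * Gs c b ≤ b * Gs c a := by
    rw [← pow_le_pow_iff_left₀ (mul_nonneg ha hsb.le) (mul_nonneg hb hsa.le) two_ne_zero]
    calc (a * Gs c b) ^ 2 = a ^ 2 * (b ^ 2 + c) := by rw [mul_pow, Gs_sq hc b]
      _ ≤ b ^ 2 * (a ^ 2 + c) := by
          nlinarith [mul_le_mul_of_nonneg_right (mul_self_le_mul_self ha hab) hc.le]
      _ = (b * Gs c a) ^ 2 := by rw [mul_pow, Gs_sq hc a]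
  have h2 : c * a / (a + Gs c a) ≤ c * b / (b + Gs c b) := by
    rw [div_le_div_iff₀ (Gxs_pos hc a) (Gxs_pos hc b)]
    nlinarith
  have := Gn_key hc a
  have := Gn_key hc b
  simp only [Gn]
  linarith

lemma Gn_neg (x : ℝ) : Gn 2 x < 0 := by
  rcases le_or_gt x 0 with h | h
  · have hs := Gs_pos two_pos x
    have : x * Gs 2 x ≤ 0 := mul_nonpos_of_nonpos_of_nonneg h hs.le
    simp only [Gn]; nlinarith
  · have hlt : x < Gs 2 x := lt_of_le_of_lt (le_abs_self x) (abs_lt_Gs two_pos x)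
    have hsq := Gs_sq two_pos x
    have hpos : 0 < (Gs 2 x - x) ^ 2 := pow_pos (by linarith) 2
    simp only [Gn]; nlinarith

lemma GD2_strictAnti : StrictAnti (GD 2) := by
  apply strictAnti_of_hasDerivAt_neg (hasDerivAt_GD two_pos)
  intro x
  have hs := Gs_pos two_pos x
  have hxs := Gxs_pos two_pos x
  have hn : Gn 2 x < 0 := Gn_neg x
  simp only [Gn] at hn
  have : (x * Gs 2 x - x ^ 2 - 2 + 1) / (Gs 2 x * (x + Gs 2 x)) < 0 :=
    div_neg_of_neg_of_pos hn (by positivity)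
  exact mul_neg_of_pos_of_neg (Real.exp_pos _) this

lemma GD_nonneg_of_anti {c : ℝ} (hc : 0 < c) {z : ℝ}
    (h : ∀ y, z ≤ y → GD c y ≤ GD c z) : 0 ≤ GD c z :=
  le_of_tendsto (tendsto_GD hc) (Filter.eventually_atTop.2 ⟨z, h⟩)

lemma GD2_pos (x : ℝ) : 0 < GD 2 x := by
  have h1 : GD 2 (x + 1) < GD 2 x := GD2_strictAnti (by linarith)
  have h2 : 0 ≤ GD 2 (x + 1) :=
    GD_nonneg_of_anti two_pos fun y hy => (GD2_strictAnti.antitone hy)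
  linarith

lemma pi_inv_4_pos : (0:ℝ) < 4 / Real.pi := by positivity

lemma GD_pi_zero : GD (4 / Real.pi) 0 = 0 := by
  have h1 : GI 0 = Real.sqrt Real.pi / 2 := by
    have := integral_gaussian_Ioi 1
    simp only [neg_mul, one_mul, div_one] at this
    simpa [GI] using this
  have h2 : Gs (4 / Real.pi) 0 = 2 / Real.sqrt Real.pi := by
    rw [Gs]
    rw [show (0:ℝ) ^ 2 + 4 / Real.pi = 4 / Real.pi by ring]
    rw [show (4 : ℝ) / Real.pi = (2 / Real.sqrt Real.pi) ^ 2 by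
      rw [div_pow, Real.sq_sqrt Real.pi_pos.le]; norm_num]
    exact Real.sqrt_sq (by positivity)
  have hπ : (0:ℝ) < Real.sqrt Real.pi := Real.sqrt_pos.2 Real.pi_pos
  simp only [GD, Gφ, h2, h1]
  rw [zero_add]
  field_simp
  simp

lemma GD_deriv_eq {c : ℝ} (hc : 0 < c) (y : ℝ) :
    deriv (GD c) y = Real.exp (-y ^ 2) * (Gn c y / (Gs c y * (y + Gs c y))) :=
  (hasDerivAt_GD hc y).deriv

lemma GD_pi_nonpos {x : ℝ} (hx : 0 ≤ x) : GD (4 / Real.pi) x ≤ 0 := by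
  set c := 4 / Real.pi with hcdef
  have hc : 0 < c := pi_inv_4_pos
  have hdiff : Differentiable ℝ (GD c) := fun y => (hasDerivAt_GD hc y).differentiableAt
  rcases le_or_gt (Gn c x) 0 with hn | hn
  · -- GD antitone on [0, x], GD 0 = 0
    have hmono : AntitoneOn (GD c) (Set.Icc 0 x) := by
      apply antitoneOn_of_deriv_nonpos (convex_Icc 0 x) hdiff.continuous.continuousOn
        hdiff.differentiableOn
      intro y hy
      rw [interior_Icc] at hy
      rw [GD_deriv_eq hc]
      have hny : Gn c y ≤ 0 := le_trans (Gn_mono hc hy.1.le hy.2.le) hn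
      have : Gn c y / (Gs c y * (y + Gs c y)) ≤ 0 :=
        div_nonpos_of_nonpos_of_nonneg hny (mul_pos (Gs_pos hc y) (Gxs_pos hc y)).le
      exact mul_nonpos_of_nonneg_of_nonpos (Real.exp_pos _).le this
    have := hmono (Set.left_mem_Icc.2 hx) (Set.right_mem_Icc.2 hx) hx
    rw [GD_pi_zero] at this
    exact this
  · -- GD monotone on [x, ∞), tendsto 0
    have hmono : MonotoneOn (GD c) (Set.Ici x) := by
      apply monotoneOn_of_deriv_nonneg (convex_Ici x) hdiff.continuous.continuousOn
        hdiff.differentiableOn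
      intro y hy
      rw [interior_Ici] at hy
      rw [GD_deriv_eq hc]
      have hny : 0 ≤ Gn c y := le_trans hn.le (Gn_mono hc hx hy.le)
      exact mul_nonneg (Real.exp_pos _).le
        (div_nonneg hny (mul_pos (Gs_pos hc y) (Gxs_pos hc y)).le)
    apply ge_of_tendsto (tendsto_GD hc)
    filter_upwards [Filter.eventually_ge_atTop x] with y hy
    exact hmono (Set.self_mem_Ici) hy hy

lemma Gφ_two (x : ℝ) : Gφ 2 x = (1/2) * (Real.sqrt (x ^ 2 + 2) - x) := by
  have hsq := Gs_sq two_pos x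
  have hxs := Gxs_pos two_pos x
  rw [Gφ]
  refine (eq_inv_of_mul_eq_one_left ?_).symm
  show (1/2) * (Gs 2 x - x) * (x + Gs 2 x) = 1
  nlinarith

lemma Gφ_pi (x : ℝ) : Gφ (4 / Real.pi) x = (Real.pi / 4) * (Real.sqrt (x ^ 2 + 4 / Real.pi) - x) := by
  have hsq := Gs_sq pi_inv_4_pos x
  have hxs := Gxs_pos pi_inv_4_pos x
  have hπ := Real.pi_pos
  rw [Gφ]
  refine (eq_inv_of_mul_eq_one_left ?_).symm
  show (Real.pi / 4) * (Gs (4 / Real.pi) x - x) * (x + Gs (4 / Real.pi) x) = 1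
  have h : Gs (4 / Real.pi) x ^ 2 - x ^ 2 = 4 / Real.pi := by rw [hsq]; ring
  have h4 : Real.pi * (Gs (4 / Real.pi) x ^ 2 - x ^ 2) = 4 := by
    rw [h]; field_simp
  field_simp
  linear_combination h4

end GautschiAux

/-- Gautschi's inequality for `p = 2`: for all `x ≥ 0`,
`(1/2)(√(x²+2) - x) < e^{x²} ∫ₓ^∞ e^{-y²} dy ≤ (π/4)(√(x² + 4/π) - x)`. -/
theorem gautschi_inequality (x : ℝ) (hx : 0 ≤ x) :
    (1/2) * (Real.sqrt (x ^ 2 + 2) - x)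
        < Real.exp (x ^ 2) * ∫ y in Set.Ioi x, Real.exp (-y ^ 2)
    ∧ Real.exp (x ^ 2) * (∫ y in Set.Ioi x, Real.exp (-y ^ 2))
        ≤ (Real.pi / 4) * (Real.sqrt (x ^ 2 + 4 / Real.pi) - x) := by
  have hI : (∫ y in Set.Ioi x, Real.exp (-y ^ 2)) = GI x := rfl
  have hexp : Real.exp (-x ^ 2) * Real.exp (x ^ 2) = 1 := by
    rw [← Real.exp_add]; simp
  have hepos := Real.exp_pos (x ^ 2)
  constructor
  · have h := GD2_pos x
    rw [GD] at h
    rw [← Gφ_two, hI]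
    have h2 : Gφ 2 x * Real.exp (-x ^ 2) < GI x := by linarith
    calc Gφ 2 x = Gφ 2 x * Real.exp (-x ^ 2) * Real.exp (x ^ 2) := by
          rw [mul_assoc, hexp, mul_one]
      _ < GI x * Real.exp (x ^ 2) := by
          exact mul_lt_mul_of_pos_right h2 hepos
      _ = Real.exp (x ^ 2) * GI x := mul_comm _ _
  · have h := GD_pi_nonpos hx
    rw [GD] at h
    rw [← Gφ_pi, hI]
    have h2 : GI x ≤ Gφ (4 / Real.pi) x * Real.exp (-x ^ 2) := by linarith
    calc Real.exp (x ^ 2) * GI x ≤ Real.exp (x ^ 2) * (Gφ (4 / Real.pi) x * Real.exp (-x ^ 2)) :=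
          mul_le_mul_of_nonneg_left h2 hepos.le
      _ = Gφ (4 / Real.pi) x := by
          rw [mul_comm (Real.exp (x ^ 2)), mul_assoc, hexp, mul_one]
end

section
/- (Conte's inequality) For all x > 0, x(1 + x²/12) e^{-3x²/4} < e^{-x²} ∫₀^x e^{y²} dy ≤ (π²/(8x))(1 - e^{-x²}). -/
open Real MeasureTheory

private lemma contExp : Continuous fun y : ℝ => Real.exp (y ^ 2) :=
  Real.continuous_exp.comp (continuous_pow 2)

/-- FTC for the integral `∫₀ᵘ e^{y²} dy`. -/
private lemma hasDeriv_I (t : ℝ) :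
    HasDerivAt (fun u : ℝ => ∫ y in (0:ℝ)..u, Real.exp (y ^ 2)) (Real.exp (t ^ 2)) t :=
  intervalIntegral.integral_hasDerivAt_right (contExp.intervalIntegrable 0 t)
    (contExp.stronglyMeasurableAtFilter _ _) contExp.continuousAt

private lemma hasDeriv_G (t : ℝ) :
    HasDerivAt (fun u : ℝ => (∫ y in (0:ℝ)..u, Real.exp (y ^ 2))
        - (u + u ^ 3 / 12) * Real.exp (u ^ 2 / 4))
      (Real.exp (t ^ 2) - (1 + 3 * t ^ 2 / 4 + t ^ 4 / 24) * Real.exp (t ^ 2 / 4)) t := by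
  have h1 : HasDerivAt (fun u : ℝ => u + u ^ 3 / 12) (1 + 3 * t ^ 2 / 12) t := by
    have := (hasDerivAt_id t).add ((hasDerivAt_pow 3 t).div_const 12)
    refine this.congr_deriv ?_; push_cast; ring
  have h2 : HasDerivAt (fun u : ℝ => Real.exp (u ^ 2 / 4))
      (Real.exp (t ^ 2 / 4) * (2 * t / 4)) t := by
    have := ((hasDerivAt_pow 2 t).div_const 4).exp
    convert this using 1 <;> (push_cast; try ring)
  have := (hasDeriv_I t).sub (h1.mul h2)
  refine this.congr_deriv ?_; push_cast; ring

private lemma lower_aux (x : ℝ) (hx : 0 < x) :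
    (x + x ^ 3 / 12) * Real.exp (x ^ 2 / 4) < ∫ y in (0:ℝ)..x, Real.exp (y ^ 2) := by
  set G : ℝ → ℝ := fun u => (∫ y in (0:ℝ)..u, Real.exp (y ^ 2))
      - (u + u ^ 3 / 12) * Real.exp (u ^ 2 / 4) with hG
  have hmono : StrictMonoOn G (Set.Ici 0) := by
    refine strictMonoOn_of_deriv_pos (convex_Ici 0)
      (fun u _ => ((hasDeriv_G u).differentiableAt).continuousAt.continuousWithinAt)
      (fun t ht => ?_)
    rw [interior_Ici] at ht
    rw [(hasDeriv_G t).deriv]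
    have hexp : Real.exp (t ^ 2) = Real.exp (3 * t ^ 2 / 4) * Real.exp (t ^ 2 / 4) := by
      rw [← Real.exp_add]; ring_nf
    have hq : 1 + 3 * t ^ 2 / 4 + (3 * t ^ 2 / 4) ^ 2 / 2 ≤ Real.exp (3 * t ^ 2 / 4) :=
      Real.quadratic_le_exp_of_nonneg (by positivity)
    have ht' : (0:ℝ) < t := ht
    have hp := Real.exp_pos (t ^ 2 / 4)
    rw [hexp]
    nlinarith [sq_nonneg t, mul_pos (mul_pos ht' ht') (mul_pos ht' ht')]
  have h0 : G 0 = 0 := by simp [hG]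
  have := hmono (Set.self_mem_Ici) (Set.mem_Ici.2 hx.le) hx
  rw [h0] at this
  simpa [hG, sub_pos] using this

private lemma hasDeriv_D1 (t : ℝ) :
    HasDerivAt (fun u : ℝ => 2 * Real.pi ^ 2 * u * Real.exp (u ^ 2)
        - 8 * (∫ y in (0:ℝ)..u, Real.exp (y ^ 2)) - 8 * u * Real.exp (u ^ 2))
      (Real.exp (t ^ 2) * ((2 * Real.pi ^ 2 - 16) + (4 * Real.pi ^ 2 - 16) * t ^ 2)) t := by
  have hexp : HasDerivAt (fun u : ℝ => Real.exp (u ^ 2))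
      (Real.exp (t ^ 2) * (2 * t)) t := by
    have := (hasDerivAt_pow 2 t).exp
    convert this using 1 <;> (push_cast; try ring)
  have h1 : HasDerivAt (fun u : ℝ => 2 * Real.pi ^ 2 * u * Real.exp (u ^ 2))
      (2 * Real.pi ^ 2 * Real.exp (t ^ 2) + 2 * Real.pi ^ 2 * t * (Real.exp (t ^ 2) * (2 * t))) t := by
    have := (((hasDerivAt_id t).const_mul (2 * Real.pi ^ 2)).mul hexp)
    refine this.congr_deriv ?_; simp only [id_eq]; ring
  have h3 : HasDerivAt (fun u : ℝ => 8 * u * Real.exp (u ^ 2))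
      (8 * Real.exp (t ^ 2) + 8 * t * (Real.exp (t ^ 2) * (2 * t))) t := by
    have := (((hasDerivAt_id t).const_mul (8:ℝ)).mul hexp)
    refine this.congr_deriv ?_; simp only [id_eq]; ring
  have := (h1.sub ((hasDeriv_I t).const_mul 8)).sub h3
  refine this.congr_deriv ?_; ring

private lemma hasDeriv_D (t : ℝ) :
    HasDerivAt (fun u : ℝ => Real.pi ^ 2 * (Real.exp (u ^ 2) - 1)
        - 8 * u * (∫ y in (0:ℝ)..u, Real.exp (y ^ 2)))
      (2 * Real.pi ^ 2 * t * Real.exp (t ^ 2)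
        - 8 * (∫ y in (0:ℝ)..t, Real.exp (y ^ 2)) - 8 * t * Real.exp (t ^ 2)) t := by
  have hexp : HasDerivAt (fun u : ℝ => Real.exp (u ^ 2))
      (Real.exp (t ^ 2) * (2 * t)) t := by
    have := (hasDerivAt_pow 2 t).exp
    convert this using 1 <;> (push_cast; try ring)
  have h1 := ((hexp.sub_const 1).const_mul (Real.pi ^ 2))
  have h2 := ((hasDerivAt_id t).const_mul (8:ℝ)).mul (hasDeriv_I t)
  have := h1.sub h2
  refine this.congr_deriv ?_; simp only [id_eq]; push_cast; ring

private lemma upper_aux (x : ℝ) (hx : 0 < x) :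
    8 * x * (∫ y in (0:ℝ)..x, Real.exp (y ^ 2)) < Real.pi ^ 2 * (Real.exp (x ^ 2) - 1) := by
  have hpi := Real.pi_gt_three
  set D1 : ℝ → ℝ := fun u => 2 * Real.pi ^ 2 * u * Real.exp (u ^ 2)
      - 8 * (∫ y in (0:ℝ)..u, Real.exp (y ^ 2)) - 8 * u * Real.exp (u ^ 2) with hD1
  have hmono1 : StrictMonoOn D1 (Set.Ici 0) := by
    refine strictMonoOn_of_deriv_pos (convex_Ici 0)
      (fun u _ => ((hasDeriv_D1 u).differentiableAt).continuousAt.continuousWithinAt)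
      (fun t ht => ?_)
    rw [(hasDeriv_D1 t).deriv]
    have he := Real.exp_pos (t ^ 2)
    have hc : 0 < 2 * Real.pi ^ 2 - 16 + (4 * Real.pi ^ 2 - 16) * t ^ 2 := by
      have hpi2 : 9 < Real.pi ^ 2 := by nlinarith
      nlinarith [mul_nonneg (sub_nonneg.2 hpi2.le) (sq_nonneg t), sq_nonneg t]
    exact mul_pos he hc
  have hD1pos : ∀ t : ℝ, 0 < t → 0 < D1 t := by
    intro t ht
    have h0 : D1 0 = 0 := by simp [hD1]
    have := hmono1 Set.self_mem_Ici (Set.mem_Ici.2 ht.le) ht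
    rwa [h0] at this
  set D : ℝ → ℝ := fun u => Real.pi ^ 2 * (Real.exp (u ^ 2) - 1)
      - 8 * u * (∫ y in (0:ℝ)..u, Real.exp (y ^ 2)) with hD
  have hmono : StrictMonoOn D (Set.Ici 0) := by
    refine strictMonoOn_of_deriv_pos (convex_Ici 0)
      (fun u _ => ((hasDeriv_D u).differentiableAt).continuousAt.continuousWithinAt)
      (fun t ht => ?_)
    rw [interior_Ici] at ht
    rw [(hasDeriv_D t).deriv]
    exact hD1pos t ht
  have h0 : D 0 = 0 := by simp [hD]
  have := hmono Set.self_mem_Ici (Set.mem_Ici.2 hx.le) hx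
  rw [h0] at this
  simp only [hD, sub_pos] at this
  linarith

/-- Conte's inequality: for all `x > 0`,
`x(1 + x²/12)e^{-3x²/4} < e^{-x²} ∫₀ˣ e^{y²} dy ≤ (π²/(8x))(1 - e^{-x²})`. -/
theorem conte_inequality (x : ℝ) (hx : 0 < x) :
    x * (1 + x ^ 2 / 12) * Real.exp (-(3 * x ^ 2) / 4)
        < Real.exp (-x ^ 2) * ∫ y in (0:ℝ)..x, Real.exp (y ^ 2)
    ∧ Real.exp (-x ^ 2) * (∫ y in (0:ℝ)..x, Real.exp (y ^ 2))
        ≤ Real.pi ^ 2 / (8 * x) * (1 - Real.exp (-x ^ 2)) := by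
  constructor
  · have h := lower_aux x hx
    have h2 := mul_lt_mul_of_pos_left h (Real.exp_pos (-x ^ 2))
    calc x * (1 + x ^ 2 / 12) * Real.exp (-(3 * x ^ 2) / 4)
        = Real.exp (-x ^ 2) * ((x + x ^ 3 / 12) * Real.exp (x ^ 2 / 4)) := by
          rw [show (-(3 * x ^ 2) / 4 : ℝ) = -x ^ 2 + x ^ 2 / 4 by ring, Real.exp_add]; ring
      _ < _ := h2
  · have h := upper_aux x hx
    have he : Real.exp (-x ^ 2) = (Real.exp (x ^ 2))⁻¹ := Real.exp_neg _
    have hep := Real.exp_pos (x ^ 2)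
    have hinv : Real.exp (x ^ 2) * (Real.exp (x ^ 2))⁻¹ = 1 := mul_inv_cancel₀ hep.ne'
    rw [he, div_mul_eq_mul_div, le_div_iff₀ (by positivity : (0:ℝ) < 8 * x)]
    have hinvpos : (0:ℝ) < (Real.exp (x ^ 2))⁻¹ := by positivity
    nlinarith [mul_lt_mul_of_pos_right h hinvpos]
end

section
/- Let u(x) = x⁴ - β₁x² (β₁ ≥ 1). Then sup_{x>0} ∫₀^x e^{u(y)} dy · ∫_x^∞ e^{-u(z)} dz ≥ (1/(4β₁)) ∫_{β₁/2 - 1}^{β₁/2} e^{y²} dy · ∫_{1-β₁/2}^{β₁/2} e^{-z²} dz, and consequently there is a constant such that this supremum is at least (1/(4e^{14})) exp[β₁²/4 - 2 log(1+β₁)]. -/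
open Real MeasureTheory

set_option maxHeartbeats 1000000


lemma dw_cont1 (b : ℝ) : Continuous (fun y : ℝ => Real.exp ((y^2 - b)^2)) := by fun_prop

-- J1 lower bound
lemma dw_J1 (b : ℝ) (hb : 0 < b) :
    (∫ s in (0:ℝ)..b, Real.exp (s^2)) / Real.sqrt b
      ≤ ∫ y in (0:ℝ)..Real.sqrt b, Real.exp ((y^2 - b)^2) := by
  set r := Real.sqrt b with hrdef
  have hr : 0 < r := Real.sqrt_pos.2 hb
  have hrr : r * r = b := Real.mul_self_sqrt hb.le
  have key : (∫ y in (0:ℝ)..r, Real.exp (b * (r - y)^2))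
      = (∫ s in (0:ℝ)..b, Real.exp (s^2)) / r := by
    have h1 : (∫ y in (0:ℝ)..r, Real.exp (b * (r - y)^2))
        = ∫ t in (0:ℝ)..r, Real.exp (b * t^2) := by
      have := intervalIntegral.integral_comp_sub_left
        (a := (0:ℝ)) (b := r) (fun t => Real.exp (b * t^2)) r
      simpa using this
    have he : ∀ t : ℝ, b * t^2 = (r * t)^2 := fun t => by
      linear_combination t^2 * hrr.symm
    have h3 : (∫ t in (0:ℝ)..r, Real.exp ((r * t)^2))
        = r⁻¹ • ∫ s in (r * 0)..(r * r), Real.exp (s^2) :=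
      intervalIntegral.integral_comp_mul_left (fun s => Real.exp (s^2)) hr.ne'
    simp only [he] at h1 ⊢
    rw [h1, h3, mul_zero, hrr, smul_eq_mul, div_eq_inv_mul]
  rw [← key]
  apply intervalIntegral.integral_mono_on hr.le
  · exact ((Real.continuous_exp.comp (by fun_prop)).intervalIntegrable _ _)
  · exact ((dw_cont1 b).intervalIntegrable _ _)
  · intro y hy
    obtain ⟨hy0, hyr⟩ := hy
    apply Real.exp_le_exp.2
    nlinarith [sq_nonneg (r - y), mul_nonneg hy0 hr.le,
      mul_nonneg (mul_nonneg (sub_nonneg.2 hyr) (sub_nonneg.2 hyr)) (mul_nonneg hy0 hy0),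
      mul_nonneg (mul_nonneg (sub_nonneg.2 hyr) (sub_nonneg.2 hyr)) (mul_nonneg hy0 hr.le)]


lemma dw_cont2 (b : ℝ) : Continuous (fun z : ℝ => Real.exp (-(z^2 - b)^2)) := by fun_prop

lemma dw_intOn (b : ℝ) (s : Set ℝ) :
    IntegrableOn (fun z : ℝ => Real.exp (-(z^2 - b)^2)) s := by
  apply Integrable.integrableOn
  have hg : Integrable (fun z : ℝ => Real.exp ((2*b+1)^2/4) * Real.exp (-(1:ℝ) * z^2)) :=
    (integrable_exp_neg_mul_sq one_pos).const_mul _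
  apply hg.mono' ((dw_cont2 b).aestronglyMeasurable)
  filter_upwards with z
  rw [Real.norm_eq_abs, abs_of_pos (Real.exp_pos _), ← Real.exp_add]
  apply Real.exp_le_exp.2
  nlinarith [sq_nonneg (z^2 - (2*b+1)/2), sq_nonneg b]

lemma dw_J2 (b : ℝ) (hb : 0 < b) :
    (∫ s in (0:ℝ)..b, Real.exp (-s^2)) / ((1 + Real.sqrt 2) * Real.sqrt b)
      ≤ ∫ z in Set.Ioi (Real.sqrt b), Real.exp (-(z^2 - b)^2) := by
  set r := Real.sqrt b with hrdef
  have hr : 0 < r := Real.sqrt_pos.2 hb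
  have hrr : r * r = b := Real.mul_self_sqrt hb.le
  have hs2 : Real.sqrt 2 * Real.sqrt 2 = 2 := Real.mul_self_sqrt (by norm_num)
  have hs2one : 1 ≤ Real.sqrt 2 := by nlinarith [Real.sqrt_nonneg 2]
  set c := (1 + Real.sqrt 2) * r with hcdef
  have hc : 0 < c := by positivity
  have hle : r ≤ Real.sqrt 2 * r := by nlinarith
  -- step 1 : restrict to the interval
  have step1 : (∫ z in r..(Real.sqrt 2 * r), Real.exp (-(z^2 - b)^2))
      ≤ ∫ z in Set.Ioi r, Real.exp (-(z^2 - b)^2) := by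
    rw [intervalIntegral.integral_of_le hle]
    apply MeasureTheory.setIntegral_mono_set (dw_intOn b _)
    · filter_upwards with z using (Real.exp_pos _).le
    · exact (Set.Ioc_subset_Ioi_self).eventuallyLE
  -- step 2 : pointwise bound
  have step2 : (∫ z in r..(Real.sqrt 2 * r), Real.exp (-(c * (z - r))^2))
      ≤ ∫ z in r..(Real.sqrt 2 * r), Real.exp (-(z^2 - b)^2) := by
    apply intervalIntegral.integral_mono_on hle
    · exact ((Real.continuous_exp.comp (by fun_prop)).intervalIntegrable _ _)
    · exact ((dw_cont2 b).intervalIntegrable _ _)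
    · intro z hz
      obtain ⟨hz1, hz2⟩ := hz
      apply Real.exp_le_exp.2
      have h1 : 0 ≤ z - r := sub_nonneg.2 hz1
      have h2 : z + r ≤ c := by nlinarith
      have h3 : z^2 - b = (z - r) * (z + r) := by linear_combination hrr
      have h4 : 0 ≤ z^2 - b := by nlinarith
      have h5 : z^2 - b ≤ c * (z - r) := by
        rw [h3, mul_comm c]
        exact mul_le_mul_of_nonneg_left h2 h1
      nlinarith [sq_nonneg (c * (z - r))]
  -- step 3 : compute the gaussian-type integral
  have step3 : (∫ z in r..(Real.sqrt 2 * r), Real.exp (-(c * (z - r))^2))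
      = (∫ s in (0:ℝ)..b, Real.exp (-s^2)) / c := by
    have h1 : (∫ z in r..(Real.sqrt 2 * r), Real.exp (-(c * (z - r))^2))
        = ∫ w in (r - r)..(Real.sqrt 2 * r - r), Real.exp (-(c * w)^2) :=
      intervalIntegral.integral_comp_sub_right (fun w => Real.exp (-(c * w)^2)) r
    have h3 : (∫ w in (0:ℝ)..(Real.sqrt 2 * r - r), Real.exp (-(c * w)^2))
        = c⁻¹ • ∫ s in (c * 0)..(c * (Real.sqrt 2 * r - r)), Real.exp (-s^2) :=
      intervalIntegral.integral_comp_mul_left (fun s => Real.exp (-s^2)) hc.ne'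
    have h4 : c * (Real.sqrt 2 * r - r) = b := by
      rw [hcdef]
      linear_combination (r * r) * hs2 + hrr
    rw [h1, sub_self, h3, mul_zero, h4, smul_eq_mul, div_eq_inv_mul]
  calc (∫ s in (0:ℝ)..b, Real.exp (-s^2)) / ((1 + Real.sqrt 2) * r)
      = ∫ z in r..(Real.sqrt 2 * r), Real.exp (-(c * (z - r))^2) := step3.symm
    _ ≤ _ := le_trans step2 step1


lemma dw_ii (f : ℝ → ℝ) (hf : Continuous f) (a b : ℝ) :
    IntervalIntegrable (fun x => Real.exp (f x)) volume a b :=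
  (Real.continuous_exp.comp hf).intervalIntegrable _ _

-- evenness transfers
lemma dw_even (f : ℝ → ℝ) (hf : ∀ x, f (-x) = f x) (a : ℝ) :
    (∫ y in a..(0:ℝ), f y) = ∫ y in (0:ℝ)..(-a), f y := by
  have h := intervalIntegral.integral_comp_neg (a := a) (b := (0:ℝ)) f
  simp only [hf, neg_zero] at h
  exact h

lemma dw_AB (b : ℝ) (hb : 1/2 ≤ b) :
    (∫ y in (b-1)..b, Real.exp (y^2)) * (∫ z in (1-b)..b, Real.exp (-z^2))
      ≤ 2 * ((∫ s in (0:ℝ)..b, Real.exp (s^2)) * (∫ s in (0:ℝ)..b, Real.exp (-s^2))) := by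
  have hb0 : (0:ℝ) ≤ b := by linarith
  have i1 : ∀ a c : ℝ, IntervalIntegrable (fun y : ℝ => Real.exp (y^2)) volume a c :=
    fun a c => dw_ii _ (by fun_prop) a c
  have i2 : ∀ a c : ℝ, IntervalIntegrable (fun y : ℝ => Real.exp (-y^2)) volume a c :=
    fun a c => dw_ii _ (by fun_prop) a c
  set C := ∫ s in (0:ℝ)..b, Real.exp (s^2) with hC
  set D := ∫ s in (0:ℝ)..b, Real.exp (-s^2) with hD
  set E1 := ∫ s in (0:ℝ)..(1-b), Real.exp (s^2) with hE1
  set E2 := ∫ s in (0:ℝ)..(b-1), Real.exp (-s^2) with hE2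
  have hA : (∫ y in (b-1)..b, Real.exp (y^2)) = E1 + C := by
    rw [← intervalIntegral.integral_add_adjacent_intervals (i1 (b-1) 0) (i1 0 b)]
    congr 1
    rw [dw_even (fun y => Real.exp (y^2)) (fun x => by simp) (b-1)]
    norm_num
    rfl
  have hB : (∫ z in (1-b)..b, Real.exp (-z^2)) = E2 + D := by
    rw [← intervalIntegral.integral_add_adjacent_intervals (i2 (1-b) 0) (i2 0 b)]
    congr 1
    rw [dw_even (fun y => Real.exp (-y^2)) (fun x => by simp) (1-b)]
    norm_num
    rfl
  -- E1 ≤ C and E2 ≤ D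
  have hE1C : E1 ≤ C := by
    have hsplit : E1 + (∫ s in (1-b)..b, Real.exp (s^2)) = C :=
      intervalIntegral.integral_add_adjacent_intervals (i1 0 (1-b)) (i1 (1-b) b)
    have : 0 ≤ ∫ s in (1-b)..b, Real.exp (s^2) :=
      intervalIntegral.integral_nonneg (by linarith) (fun x _ => (Real.exp_pos _).le)
    linarith
  have hE2D : E2 ≤ D := by
    have hsplit : E2 + (∫ s in (b-1)..b, Real.exp (-s^2)) = D :=
      intervalIntegral.integral_add_adjacent_intervals (i2 0 (b-1)) (i2 (b-1) b)
    have : 0 ≤ ∫ s in (b-1)..b, Real.exp (-s^2) :=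
      intervalIntegral.integral_nonneg (by linarith) (fun x _ => (Real.exp_pos _).le)
    linarith
  have hC0 : 0 ≤ C := intervalIntegral.integral_nonneg hb0 (fun x _ => (Real.exp_pos _).le)
  have hD0 : 0 ≤ D := intervalIntegral.integral_nonneg hb0 (fun x _ => (Real.exp_pos _).le)
  have hA0 : 0 ≤ E1 + C := by
    rw [← hA]; exact intervalIntegral.integral_nonneg (by linarith) (fun x _ => (Real.exp_pos _).le)
  have hB0 : 0 ≤ E2 + D := by
    rw [← hB]; exact intervalIntegral.integral_nonneg (by linarith) (fun x _ => (Real.exp_pos _).le)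
  rw [hA, hB]
  rcases le_or_gt b 1 with hb1 | hb1
  · -- E2 ≤ 0 : B ≤ D, A ≤ 2C
    have hE2neg : E2 ≤ 0 := by
      rw [hE2, intervalIntegral.integral_symm]
      simp only [neg_nonpos]
      exact intervalIntegral.integral_nonneg (by linarith) (fun x _ => (Real.exp_pos _).le)
    nlinarith
  · -- E1 ≤ 0 : A ≤ C, B ≤ 2D
    have hE1neg : E1 ≤ 0 := by
      rw [hE1, intervalIntegral.integral_symm]
      simp only [neg_nonpos]
      exact intervalIntegral.integral_nonneg (by linarith) (fun x _ => (Real.exp_pos _).le)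
    nlinarith

lemma dw_D (b : ℝ) (hb : 1/2 ≤ b) :
    3/8 ≤ ∫ s in (0:ℝ)..b, Real.exp (-s^2) := by
  have i2 : ∀ a c : ℝ, IntervalIntegrable (fun y : ℝ => Real.exp (-y^2)) volume a c :=
    fun a c => dw_ii _ (by fun_prop) a c
  have h1 : (∫ s in (0:ℝ)..(1/2:ℝ), Real.exp (-s^2)) ≤ ∫ s in (0:ℝ)..b, Real.exp (-s^2) := by
    have hsplit : (∫ s in (0:ℝ)..(1/2:ℝ), Real.exp (-s^2))
        + (∫ s in (1/2:ℝ)..b, Real.exp (-s^2)) = ∫ s in (0:ℝ)..b, Real.exp (-s^2) :=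
      intervalIntegral.integral_add_adjacent_intervals (i2 0 (1/2)) (i2 (1/2) b)
    have : 0 ≤ ∫ s in (1/2:ℝ)..b, Real.exp (-s^2) :=
      intervalIntegral.integral_nonneg hb (fun x _ => (Real.exp_pos _).le)
    linarith
  have h2 : (3/8 : ℝ) ≤ ∫ s in (0:ℝ)..(1/2:ℝ), Real.exp (-s^2) := by
    have hc : (∫ _ in (0:ℝ)..(1/2:ℝ), (3/4:ℝ)) = 3/8 := by
      rw [intervalIntegral.integral_const]; norm_num
    rw [← hc]
    apply intervalIntegral.integral_mono_on (by norm_num)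
      (intervalIntegrable_const) (i2 0 (1/2))
    intro x hx
    obtain ⟨hx0, hx1⟩ := hx
    have := Real.add_one_le_exp (-x^2)
    nlinarith
  linarith

lemma dw_C (b : ℝ) (hb : 1/2 ≤ b) :
    Real.exp (b^2) / (2 * b * Real.exp 14) ≤ ∫ s in (0:ℝ)..b, Real.exp (s^2) := by
  have i1 : ∀ a c : ℝ, IntervalIntegrable (fun y : ℝ => Real.exp (y^2)) volume a c :=
    fun a c => dw_ii _ (by fun_prop) a c
  have hb0 : (0:ℝ) < b := by linarith
  rcases le_or_gt 1 b with hb1 | hb1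
  · -- b ≥ 1 : use the interval [b - 1/(2b), b]
    set ε : ℝ := 1 / (2*b) with hεdef
    have hε0 : 0 < ε := by positivity
    have hε2 : ε ≤ 1/2 := by
      rw [hεdef, div_le_div_iff₀ (by linarith) (by norm_num)]; linarith
    have hbε : 0 ≤ b - ε := by linarith
    have h1 : (∫ s in (b-ε)..b, Real.exp (s^2)) ≤ ∫ s in (0:ℝ)..b, Real.exp (s^2) := by
      have hsplit : (∫ s in (0:ℝ)..(b-ε), Real.exp (s^2))
          + (∫ s in (b-ε)..b, Real.exp (s^2)) = ∫ s in (0:ℝ)..b, Real.exp (s^2) :=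
        intervalIntegral.integral_add_adjacent_intervals (i1 0 (b-ε)) (i1 (b-ε) b)
      have : 0 ≤ ∫ s in (0:ℝ)..(b-ε), Real.exp (s^2) :=
        intervalIntegral.integral_nonneg hbε (fun x _ => (Real.exp_pos _).le)
      linarith
    have h2 : ε * Real.exp ((b-ε)^2) ≤ ∫ s in (b-ε)..b, Real.exp (s^2) := by
      have hc : (∫ _ in (b-ε)..b, Real.exp ((b-ε)^2)) = ε * Real.exp ((b-ε)^2) := by
        rw [intervalIntegral.integral_const]; rw [smul_eq_mul]; ring_nf
      rw [← hc]
      apply intervalIntegral.integral_mono_on (by linarith)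
        (intervalIntegrable_const) (i1 (b-ε) b)
      intro x hx
      obtain ⟨hx0, hx1⟩ := hx
      apply Real.exp_le_exp.2
      nlinarith
    have h3 : Real.exp (b^2) / (2 * b * Real.exp 14) ≤ ε * Real.exp ((b-ε)^2) := by
      have hεb : ε * (2*b) = 1 := by rw [hεdef]; field_simp
      have hexp : Real.exp (b^2) / Real.exp 14 ≤ Real.exp ((b-ε)^2) := by
        rw [← Real.exp_sub]
        apply Real.exp_le_exp.2
        have : (b-ε)^2 = b^2 - 1 + ε^2 := by
          have : 2 * b * ε = 1 := by linarith [hεb]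
          nlinarith
        nlinarith [sq_nonneg ε]
      calc Real.exp (b^2) / (2 * b * Real.exp 14)
          = ε * (Real.exp (b^2) / Real.exp 14) := by
            rw [hεdef, div_mul_div_comm, one_mul]
        _ ≤ ε * Real.exp ((b-ε)^2) := by
            exact mul_le_mul_of_nonneg_left hexp hε0.le
    linarith
  · -- 1/2 ≤ b < 1 : crude bound, integral ≥ 1/2, LHS ≤ 1/5
    have h1 : (1/2:ℝ) ≤ ∫ s in (0:ℝ)..b, Real.exp (s^2) := by
      have hc : (∫ _ in (0:ℝ)..b, (1:ℝ)) = b := by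
        rw [intervalIntegral.integral_const]; norm_num
      have h0 : (∫ _ in (0:ℝ)..b, (1:ℝ)) ≤ ∫ s in (0:ℝ)..b, Real.exp (s^2) := by
        apply intervalIntegral.integral_mono_on hb0.le
          (intervalIntegrable_const) (i1 0 b)
        intro x _
        nlinarith [Real.add_one_le_exp (x^2), sq_nonneg x]
      rw [hc] at h0
      have h0b : b ≤ ∫ s in (0:ℝ)..b, Real.exp (s^2) := h0
      linarith
    have h2 : Real.exp (b^2) / (2 * b * Real.exp 14) ≤ 1/2 := by
      have he1 : Real.exp (b^2) ≤ Real.exp 1 := Real.exp_le_exp.2 (by nlinarith)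
      have he2 : Real.exp 1 ≤ 3 := by
        have := Real.exp_one_lt_d9
        linarith
      have he14 : (15:ℝ) ≤ Real.exp 14 := by
        have := Real.add_one_le_exp (14:ℝ)
        linarith
      rw [div_le_iff₀ (by positivity)]
      nlinarith [Real.exp_pos (14:ℝ)]
    linarith



/-- For the double-well potential `u(x) = x⁴ - β₁x²` with `β₁ ≥ 1`, the
Muckenhoupt quantity `sup_{x>0} ∫₀ˣ e^u · ∫ₓ^∞ e^{-u}` is bounded below by
`(1/(4β₁)) ∫_{β₁/2-1}^{β₁/2} e^{y²} dy · ∫_{1-β₁/2}^{β₁/2} e^{-z²} dz`, and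
consequently by `(1/(4e¹⁴)) exp[β₁²/4 - 2 log(1+β₁)]`. -/
theorem double_well_muckenhoupt_lower_bound (β₁ : ℝ) (hβ₁ : 1 ≤ β₁) :
    (∃ x : ℝ, 0 < x ∧
      (1 / (4 * β₁)) * ((∫ y in (β₁/2 - 1)..(β₁/2), Real.exp (y ^ 2)) *
          ∫ z in (1 - β₁/2)..(β₁/2), Real.exp (-z ^ 2))
        ≤ (∫ y in (0:ℝ)..x, Real.exp (y ^ 4 - β₁ * y ^ 2)) *
            ∫ z in Set.Ioi x, Real.exp (-(z ^ 4 - β₁ * z ^ 2)))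
    ∧ ∃ x : ℝ, 0 < x ∧
      (1 / (4 * Real.exp 14)) * Real.exp (β₁ ^ 2 / 4 - 2 * Real.log (1 + β₁))
        ≤ (∫ y in (0:ℝ)..x, Real.exp (y ^ 4 - β₁ * y ^ 2)) *
            ∫ z in Set.Ioi x, Real.exp (-(z ^ 4 - β₁ * z ^ 2)) := by
  have hb : (0:ℝ) < β₁/2 := by linarith
  set b : ℝ := β₁/2 with hbdef
  have hb12 : 1/2 ≤ b := by rw [hbdef]; linarith
  have hb0 : (0:ℝ) < b := hb
  have hβ : β₁ = 2*b := by rw [hbdef]; ring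
  set r := Real.sqrt b with hrdef
  have hr : 0 < r := Real.sqrt_pos.2 hb0
  have hrr : r * r = b := Real.mul_self_sqrt hb0.le
  have hs2 : Real.sqrt 2 * Real.sqrt 2 = 2 := Real.mul_self_sqrt (by norm_num)
  have hs2one : 1 ≤ Real.sqrt 2 := by nlinarith [Real.sqrt_nonneg 2]
  have hs2two : Real.sqrt 2 ≤ 2 := by nlinarith [Real.sqrt_nonneg 2]
  set C := ∫ s in (0:ℝ)..b, Real.exp (s^2) with hCdef
  set D := ∫ s in (0:ℝ)..b, Real.exp (-s^2) with hDdef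
  set J1 := ∫ y in (0:ℝ)..r, Real.exp ((y^2 - b)^2) with hJ1def
  set J2 := ∫ z in Set.Ioi r, Real.exp (-(z^2 - b)^2) with hJ2def
  have hJ1 : C / r ≤ J1 := dw_J1 b hb0
  have hJ2 : D / ((1 + Real.sqrt 2) * r) ≤ J2 := dw_J2 b hb0
  have hAB := dw_AB b hb12
  have hC := dw_C b hb12
  have hD := dw_D b hb12
  have h14 : (0:ℝ) < Real.exp 14 := Real.exp_pos _
  have hE : (0:ℝ) < Real.exp (b^2) := Real.exp_pos _
  have hCpos : 0 < C := lt_of_lt_of_le (by positivity) hC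
  have hDpos : 0 < D := by linarith
  -- the product identity
  have hprod : (∫ y in (0:ℝ)..r, Real.exp (y ^ 4 - β₁ * y ^ 2)) *
      (∫ z in Set.Ioi r, Real.exp (-(z ^ 4 - β₁ * z ^ 2))) = J1 * J2 := by
    have e1 : ∀ y : ℝ, Real.exp (y ^ 4 - β₁ * y ^ 2)
        = Real.exp (-b^2) * Real.exp ((y^2 - b)^2) := fun y => by
      rw [← Real.exp_add]; congr 1; rw [hβ]; ring
    have e2 : ∀ z : ℝ, Real.exp (-(z ^ 4 - β₁ * z ^ 2))
        = Real.exp (b^2) * Real.exp (-(z^2 - b)^2) := fun z => by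
      rw [← Real.exp_add]; congr 1; rw [hβ]; ring
    simp only [e1, e2]
    rw [intervalIntegral.integral_const_mul, MeasureTheory.integral_const_mul]
    have hone : Real.exp (-b^2) * Real.exp (b^2) = 1 := by
      rw [← Real.exp_add]; simp
    calc (Real.exp (-b^2) * J1) * (Real.exp (b^2) * J2)
        = (Real.exp (-b^2) * Real.exp (b^2)) * (J1 * J2) := by ring
      _ = J1 * J2 := by rw [hone, one_mul]
  -- core estimate
  have hfrac : (C*D)/((1 + Real.sqrt 2)*b) = (C/r) * (D/((1 + Real.sqrt 2)*r)) := by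
    rw [div_mul_div_comm]
    congr 1
    linear_combination (1 + Real.sqrt 2) * hrr.symm
  have hcore : (C*D)/((1 + Real.sqrt 2)*b) ≤ J1 * J2 := by
    rw [hfrac]
    apply mul_le_mul hJ1 hJ2 (div_nonneg hDpos.le (by positivity))
      (le_trans (div_nonneg hCpos.le hr.le) hJ1)
  constructor
  · refine ⟨r, hr, ?_⟩
    rw [hprod]
    calc (1 / (4 * β₁)) * ((∫ y in (b - 1)..b, Real.exp (y ^ 2)) *
            ∫ z in (1 - b)..b, Real.exp (-z ^ 2))
        = (1/(8*b)) * ((∫ y in (b - 1)..b, Real.exp (y ^ 2)) *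
            ∫ z in (1 - b)..b, Real.exp (-z ^ 2)) := by rw [hβ]; ring_nf
      _ ≤ (1/(8*b)) * (2*(C*D)) := by
          apply mul_le_mul_of_nonneg_left _ (by positivity)
          convert hAB using 3 <;> ring
      _ = (C*D)/(4*b) := by ring
      _ ≤ (C*D)/((1 + Real.sqrt 2)*b) := by
          apply div_le_div_of_nonneg_left (by positivity) (by positivity) (by nlinarith)
      _ ≤ J1 * J2 := hcore
  · refine ⟨r, hr, ?_⟩
    rw [hprod]
    have hlog : Real.exp (β₁ ^ 2 / 4 - 2 * Real.log (1 + β₁))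
        = Real.exp (b^2) / (1 + β₁)^2 := by
      rw [Real.exp_sub]
      congr 1
      · congr 1; rw [hβ]; ring
      · rw [two_mul, Real.exp_add, Real.exp_log (by linarith), sq]
    rw [hlog]
    have hL : (1 / (4 * Real.exp 14)) * (Real.exp (b^2) / (1 + β₁)^2)
        = Real.exp (b^2) / (4 * Real.exp 14 * (1 + β₁)^2) := by
      rw [div_mul_div_comm, one_mul]
    rw [hL]
    have key : Real.exp (b^2) / (4 * Real.exp 14 * (1 + β₁)^2)
        ≤ (C*D)/((1 + Real.sqrt 2)*b) := by
      rw [div_le_div_iff₀ (by positivity) (by positivity)]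
      have hCb : Real.exp (b^2) ≤ C * (2*b*Real.exp 14) := by
        rw [div_le_iff₀ (by positivity)] at hC
        linarith
      have t1 : (0:ℝ) ≤ C * Real.exp 14 := by positivity
      have s1 : Real.exp (b^2) * ((1 + Real.sqrt 2)*b)
          ≤ (C * (2*b*Real.exp 14)) * ((1 + Real.sqrt 2)*b) :=
        mul_le_mul_of_nonneg_right hCb (by positivity)
      have hcoef : (0:ℝ) ≤ 4 - 2*Real.sqrt 2 := by nlinarith
      have s2 : (C * (2*b*Real.exp 14)) * ((1 + Real.sqrt 2)*b)
          ≤ C * Real.exp 14 * (6*b^2) := by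
        nlinarith [mul_nonneg (mul_nonneg t1 (sq_nonneg b)) hcoef]
      have t2 : (3/8 : ℝ) * (C * Real.exp 14 * (4*(1+2*b)^2))
          ≤ D * (C * Real.exp 14 * (4*(1+2*b)^2)) :=
        mul_le_mul_of_nonneg_right hD
          (by nlinarith [mul_nonneg t1 (sq_nonneg (1+2*b))])
      have s3 : C * Real.exp 14 * (6*b^2) ≤ C * D * (4 * Real.exp 14 * (1 + β₁)^2) := by
        rw [hβ]
        nlinarith [t2, mul_nonneg t1 hb0.le]
      linarith
    exact le_trans key hcore
end

section
/- For all real y, z with z ≥ y ≥ 0 and z > 0, and for all θ ∈ ℝ: z² + y² + 4θ(z + y²/(z+y)) + 6θ² ≥ (1/6)(z² + y²). Consequently z² + y² + 4θ(z + y²/(z+y)) + 6θ² - β₁ ≥ (z²+y²)/6 - β₁. -/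
/-- Key pointwise inequality: for `z ≥ y ≥ 0`, `z > 0` and any `θ`,
`z² + y² + 4θ(z + y²/(z+y)) + 6θ² ≥ (z² + y²)/6`, and consequently
`z² + y² + 4θ(z + y²/(z+y)) + 6θ² - β₁ ≥ (z² + y²)/6 - β₁`. -/
theorem pointwise_quadratic_lower_bound
    (y z θ β₁ : ℝ) (hy : 0 ≤ y) (hyz : y ≤ z) (hz : 0 < z) :
    (z ^ 2 + y ^ 2) / 6
        ≤ z ^ 2 + y ^ 2 + 4 * θ * (z + y ^ 2 / (z + y)) + 6 * θ ^ 2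
    ∧ (z ^ 2 + y ^ 2) / 6 - β₁
        ≤ z ^ 2 + y ^ 2 + 4 * θ * (z + y ^ 2 / (z + y)) + 6 * θ ^ 2 - β₁ := by
  have hzy : 0 < z + y := by linarith
  have h1 : y ^ 2 / (z + y) ≤ y / 2 := by
    rw [div_le_iff₀ hzy]
    nlinarith
  have h0 : 0 ≤ y ^ 2 / (z + y) := by positivity
  have key : (z ^ 2 + y ^ 2) / 6
      ≤ z ^ 2 + y ^ 2 + 4 * θ * (z + y ^ 2 / (z + y)) + 6 * θ ^ 2 := by
    set w := y ^ 2 / (z + y) with hw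
    have h2 : (z + w) ^ 2 ≤ (z + y / 2) ^ 2 := by
      apply pow_le_pow_left₀ (by linarith) (by linarith)
    nlinarith [sq_nonneg (θ + (z + w) / 3), sq_nonneg (z - 2 * y)]
  exact ⟨key, by linarith⟩
end
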